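/- The sequence space c₀^λ(F̂) is not contained in ℓ∞: there exists a sequence x (namely x_n = f_{n+1}²) with x ∈ c₀^λ(F̂) but x unbounded. -/

import Mathlib

open Filter Finset

noncomputable def fibR : ℕ → ℝ
  | 0 => 1
  | 1 => 1
  | (n + 2) => fibR (n + 1) + fibR n

noncomputable def Fhat (x : ℕ → ℝ) (n : ℕ) : ℝ :=
  fibR n / fibR (n + 1) * x n - fibR (n + 1) / fibR n * (if n = 0 then 0 else x (n - 1))

noncomputable def Fbar (Λ : ℕ → ℝ) (x : ℕ → ℝ) (n : ℕ) : ℝ :=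
  (1 / Λ n) * ∑ k ∈ Finset.range (n + 1),
    (Λ k - if k = 0 then 0 else Λ (k - 1)) *
      (fibR k / fibR (k + 1) * x k -
        fibR (k + 1) / fibR k * (if k = 0 then 0 else x (k - 1)))

lemma fibR_one_le : ∀ n, 1 ≤ fibR n := by
  intro n
  induction n using Nat.twoStepInduction with
  | zero => norm_num [fibR]
  | one => norm_num [fibR]
  | more n ih1 ih2 => rw [fibR]; linarith

lemma fibR_pos (n : ℕ) : 0 < fibR n := lt_of_lt_of_le one_pos (fibR_one_le n)

lemma fibR_ge (n : ℕ) : (n : ℝ) ≤ fibR (n + 1) := by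
  induction n with
  | zero => simp [fibR]
  | succ n ih =>
    push_cast
    show (n + 1 : ℝ) ≤ fibR (n + 2)
    rw [fibR]
    have := fibR_one_le n
    push_cast
    linarith

theorem c0lambdaF_not_subset_linf (Λ : ℕ → ℝ) (hmono : StrictMono Λ)
    (hpos : ∀ k, 0 < Λ k) (hlim : Tendsto Λ atTop atTop) :
    ∃ x : ℕ → ℝ, (∀ n, x n = fibR (n + 1) ^ 2) ∧
      Tendsto (Fbar Λ x) atTop (nhds 0) ∧ ¬ ∃ M : ℝ, ∀ n, |x n| ≤ M := by
  refine ⟨fun n => fibR (n + 1) ^ 2, fun n => rfl, ?_, ?_⟩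
  · -- the sum telescopes to Λ 0
    have hterm : ∀ k : ℕ,
        (Λ k - if k = 0 then 0 else Λ (k - 1)) *
          (fibR k / fibR (k + 1) * fibR (k + 1) ^ 2 -
            fibR (k + 1) / fibR k * (if k = 0 then 0 else fibR (k - 1 + 1) ^ 2)) =
          if k = 0 then Λ 0 else 0 := by
      intro k
      cases k with
      | zero => norm_num [fibR]
      | succ m =>
        simp only [Nat.succ_ne_zero, if_false, Nat.succ_sub_one]
        have h1 := (fibR_pos (m + 1)).ne'
        have h2 := (fibR_pos (m + 2)).ne'
        field_simp
        ring
    have hsum : ∀ n : ℕ, Fbar Λ (fun n => fibR (n + 1) ^ 2) n = Λ 0 / Λ n := by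
      intro n
      unfold Fbar
      simp only [hterm]
      rw [Finset.sum_ite_eq' (Finset.range (n + 1)) 0 (fun _ => Λ 0)]
      simp [Finset.mem_range, div_eq_mul_inv, mul_comm]
    have : Tendsto (fun n => Λ 0 / Λ n) atTop (nhds 0) := by
      simpa [div_eq_mul_inv] using
        (hlim.inv_tendsto_atTop).const_mul (Λ 0)
    simpa [funext hsum] using this
  · rintro ⟨M, hM⟩
    have h := hM (⌈M⌉₊ + 1)
    simp only [] at h
    rw [abs_of_nonneg (sq_nonneg (fibR (⌈M⌉₊ + 1 + 1)))] at h
    have h1 : (⌈M⌉₊ : ℝ) + 1 ≤ fibR (⌈M⌉₊ + 1 + 1) := by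
      simpa using fibR_ge (⌈M⌉₊ + 1)
    have h2 : fibR (⌈M⌉₊ + 1 + 1) ≤ fibR (⌈M⌉₊ + 1 + 1) ^ 2 :=
      le_self_pow₀ (fibR_one_le _) two_ne_zero
    have h3 : M ≤ (⌈M⌉₊ : ℝ) := Nat.le_ceil M
    linarith
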